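/- Let Λ be a non-ordinary numerical semigroup with conductor c = c(Λ), jump u = u(Λ) and ω = ω(Λ). If σ is a right generator of Λ with σ ≢ 0 (mod ω), then σ is a strong generator of Λ if and only if σ < c + u. -/
import Mathlib


open Pointwise

namespace NumSgpPaper

/-- `S` is a numerical semigroup: an additive submonoid of ℕ with finite complement. -/
structure IsNumSgp (S : Set ℕ) : Prop where
  zero_mem : 0 ∈ S
  add_mem : ∀ ⦃a b : ℕ⦄, a ∈ S → b ∈ S → a + b ∈ S
  cofinite : Sᶜ.Finite

/-- The Frobenius number: the largest gap of `S` (junk value `0` if there are no gaps). -/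
noncomputable def frob (S : Set ℕ) : ℕ := sSup Sᶜ

open Classical in
/-- The conductor: one plus the largest gap, and `0` if there are no gaps (so `c(ℕ) = 0`). -/
noncomputable def conductor (S : Set ℕ) : ℕ := if Sᶜ = ∅ then 0 else frob S + 1

/-- The genus: the number of gaps. -/
noncomputable def genus (S : Set ℕ) : ℕ := Sᶜ.ncard

/-- The multiplicity: the smallest positive element. -/
noncomputable def mult (S : Set ℕ) : ℕ := sInf {n : ℕ | n ∈ S ∧ 0 < n}

/-- The jump: the difference between the second and first positive elements. -/
noncomputable def jump (S : Set ℕ) : ℕ := sInf {n : ℕ | n ∈ S ∧ mult S < n} - mult S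

/-- A minimal generator: a positive element of `S` that is not the sum of
two positive elements of `S`. -/
def IsMinGen (S : Set ℕ) (x : ℕ) : Prop :=
  0 < x ∧ x ∈ S ∧ ¬ ∃ a b : ℕ, 0 < a ∧ 0 < b ∧ a ∈ S ∧ b ∈ S ∧ a + b = x

/-- A right generator: a minimal generator larger than the Frobenius number. -/
def IsRightGen (S : Set ℕ) (x : ℕ) : Prop := IsMinGen S x ∧ frob S < x

/-- A strong generator: a right generator `σ` such that `σ + m(S)` is a minimal
generator of `S \ {σ}`. -/
def IsStrongGen (S : Set ℕ) (σ : ℕ) : Prop :=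
  IsRightGen S σ ∧ IsMinGen (S \ {σ}) (σ + mult S)

/-- `S` is ordinary when its gaps are exactly `{1, …, g(S)}`. -/
def IsOrdinary (S : Set ℕ) : Prop := Sᶜ = Set.Icc 1 (genus S)

/-- The left elements: the elements of `S` smaller than the Frobenius number. -/
def leftEls (S : Set ℕ) : Set ℕ := {x : ℕ | x ∈ S ∧ x < frob S}

/-- The gcd of a set of natural numbers. -/
noncomputable def setGcd (A : Set ℕ) : ℕ :=
  sInf {d : ℕ | (∀ a ∈ A, d ∣ a) ∧ ∀ e : ℕ, (∀ a ∈ A, e ∣ a) → e ∣ d}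

/-- `ω(S)`: the gcd of the left elements of `S`. -/
noncomputable def omega' (S : Set ℕ) : ℕ := setGcd (leftEls S)

/-- The shrinking of `S`: the additive submonoid of ℕ generated by the left
elements divided by their gcd. -/
noncomputable def shrink (S : Set ℕ) : Set ℕ :=
  (AddSubmonoid.closure ((fun x => x / omega' S) '' leftEls S) : AddSubmonoid ℕ)

/-- `T` is a descendant of `S`: a numerical semigroup contained in `S` all of whose
missing elements lie beyond the Frobenius number of `S`. -/
def IsDescendant (S T : Set ℕ) : Prop :=
  IsNumSgp T ∧ T ⊆ S ∧ ∀ x ∈ S \ T, frob S < x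

/-- The pseudo-ordinary semigroup `P_{m,u} = {0, m} ∪ {n : n ≥ m + u}`. -/
def P (m u : ℕ) : Set ℕ := {0, m} ∪ {n : ℕ | m + u ≤ n}

/-- The submonoid of ℕ generated by the interval `{a, …, b}`. -/
def intervalSgp (a b : ℕ) : Set ℕ := (AddSubmonoid.closure (Set.Icc a b) : AddSubmonoid ℕ)


/-- A right generator `σ` of a non-ordinary semigroup `Λ` with `ω(Λ) ∤ σ` is strong
iff `σ < c + u`. -/
theorem stmt6 (Λ : Set ℕ) (h : IsNumSgp Λ) (hord : ¬ IsOrdinary Λ)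
    (σ : ℕ) (hσ : IsRightGen Λ σ) (hmod : ¬ omega' Λ ∣ σ) :
    IsStrongGen Λ σ ↔ σ < conductor Λ + jump Λ := by
  classical
  -- basic facts
  have hne : Λᶜ.Nonempty := by
    rcases Set.eq_empty_or_nonempty Λᶜ with he | hx
    · exfalso
      apply hord
      unfold IsOrdinary genus
      rw [he]
      simp
    · exact hx
  have hbdd : BddAbove Λᶜ := h.cofinite.bddAbove
  have hFnot : frob Λ ∉ Λ := Nat.sSup_mem hne hbdd
  have hbig : ∀ n, frob Λ < n → n ∈ Λ := by
    intro n hn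
    by_contra hc
    exact absurd (le_csSup hbdd hc) (not_le.mpr hn)
  have hcond : conductor Λ = frob Λ + 1 := by
    unfold conductor
    rw [if_neg (Set.nonempty_iff_ne_empty.mp hne)]
  -- multiplicity
  have hMne : {n : ℕ | n ∈ Λ ∧ 0 < n}.Nonempty :=
    ⟨frob Λ + 1, hbig _ (lt_add_one _), Nat.succ_pos _⟩
  have hm : mult Λ ∈ Λ ∧ 0 < mult Λ := Nat.sInf_mem hMne
  have hmle : ∀ a ∈ Λ, 0 < a → mult Λ ≤ a := fun a ha h0 => Nat.sInf_le ⟨ha, h0⟩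
  -- m < frob
  have hmF : mult Λ < frob Λ := by
    by_contra hc
    push_neg at hc
    apply hord
    have hC : Λᶜ = Set.Icc 1 (frob Λ) := by
      ext x
      constructor
      · intro hx
        refine ⟨?_, le_csSup hbdd hx⟩
        rcases Nat.eq_zero_or_pos x with h0 | h0
        · exact absurd (h0 ▸ h.zero_mem) hx
        · exact h0
      · intro hx
        intro hxΛ
        have := le_trans hc (hmle x hxΛ hx.1)
        have : x = frob Λ := le_antisymm hx.2 this
        exact hFnot (this ▸ hxΛ)
    unfold IsOrdinary genus
    rw [hC]
    have hcard : (Set.Icc 1 (frob Λ)).ncard = frob Λ := by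
      rw [← Finset.coe_Icc, Set.ncard_coe_finset, Nat.card_Icc]
      omega
    rw [hcard]
  -- second element / jump
  have hNne : {n : ℕ | n ∈ Λ ∧ mult Λ < n}.Nonempty :=
    ⟨mult Λ + frob Λ + 1, hbig _ (by omega), by omega⟩
  have hs : sInf {n : ℕ | n ∈ Λ ∧ mult Λ < n} ∈ {n : ℕ | n ∈ Λ ∧ mult Λ < n} :=
    Nat.sInf_mem hNne
  have hs2 : mult Λ < sInf {n : ℕ | n ∈ Λ ∧ mult Λ < n} := hs.2
  have hsec : sInf {n : ℕ | n ∈ Λ ∧ mult Λ < n} = mult Λ + jump Λ := by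
    unfold jump
    omega
  have hu1 : 1 ≤ jump Λ := by
    unfold jump
    omega
  have hsecmem : mult Λ + jump Λ ∈ Λ := hsec ▸ hs.1
  have hsecle : ∀ a ∈ Λ, mult Λ < a → mult Λ + jump Λ ≤ a := by
    intro a ha hma
    have := Nat.sInf_le (show a ∈ {n : ℕ | n ∈ Λ ∧ mult Λ < n} from ⟨ha, hma⟩)
    omega
  -- omega' divides left elements
  have hfinL : (leftEls Λ).Finite :=
    (Set.finite_Iio (frob Λ)).subset (fun x hx => hx.2)
  have hd0 : (∀ a ∈ leftEls Λ, hfinL.toFinset.gcd id ∣ a) ∧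
      ∀ e : ℕ, (∀ a ∈ leftEls Λ, e ∣ a) → e ∣ hfinL.toFinset.gcd id := by
    constructor
    · intro a ha
      exact Finset.gcd_dvd (hfinL.mem_toFinset.mpr ha)
    · intro e he
      exact Finset.dvd_gcd (fun a ha => he a (hfinL.mem_toFinset.mp ha))
  have homem : omega' Λ ∈ {d : ℕ | (∀ a ∈ leftEls Λ, d ∣ a) ∧
      ∀ e : ℕ, (∀ a ∈ leftEls Λ, e ∣ a) → e ∣ d} := Nat.sInf_mem ⟨_, hd0⟩
  have hωdvd : ∀ a ∈ Λ, a < frob Λ → omega' Λ ∣ a := fun a ha hlt => homem.1 a ⟨ha, hlt⟩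
  have hωm : omega' Λ ∣ mult Λ := hωdvd _ hm.1 hmF
  have hσΛ : σ ∈ Λ := hσ.1.2.1
  have hσF : frob Λ < σ := hσ.2
  constructor
  · -- strong → σ < c + u
    intro hstrong
    by_contra hc
    push_neg at hc
    rw [hcond] at hc
    apply hstrong.2.2.2
    refine ⟨mult Λ + jump Λ, σ - jump Λ, by omega, by omega, ⟨hsecmem, ?_⟩, ⟨?_, ?_⟩, by omega⟩
    · simp only [Set.mem_singleton_iff]
      omega
    · exact hbig _ (by omega)
    · simp only [Set.mem_singleton_iff]
      omega
  · -- σ < c + u → strong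
    intro hlt
    rw [hcond] at hlt
    refine ⟨hσ, by omega, ⟨h.add_mem hσΛ hm.1, ?_⟩, ?_⟩
    · simp only [Set.mem_singleton_iff]
      omega
    · rintro ⟨a, b, ha0, hb0, ⟨haΛ, haσ⟩, ⟨hbΛ, hbσ⟩, hab⟩
      simp only [Set.mem_singleton_iff] at haσ hbσ
      have key : ∀ x y : ℕ, 0 < x → x ∈ Λ → x ≠ σ → y ∈ Λ → y ≠ σ → x ≤ y →
          x + y = σ + mult Λ → False := by
        intro x y hx0 hxΛ hxσ hyΛ hyσ hxy hsum
        have hxm : mult Λ ≤ x := hmle x hxΛ hx0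
        have hxne : x ≠ mult Λ := by
          intro hxe
          exact hyσ (by omega)
        have hx2 : mult Λ + jump Λ ≤ x := hsecle x hxΛ (by omega)
        have hyF : y < frob Λ := by
          have hyle : y ≤ frob Λ := by omega
          rcases lt_or_eq_of_le hyle with h1 | h1
          · exact h1
          · exact absurd (h1 ▸ hyΛ) hFnot
        have hωx : omega' Λ ∣ x := hωdvd x hxΛ (by omega)
        have hωy : omega' Λ ∣ y := hωdvd y hyΛ hyF
        apply hmod
        have hsm : omega' Λ ∣ σ + mult Λ := hsum ▸ dvd_add hωx hωy
        have := Nat.dvd_sub hsm hωm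
        simpa using this
      rcases le_total a b with hab2 | hab2
      · exact key a b ha0 haΛ haσ hbΛ hbσ hab2 hab
      · exact key b a hb0 hbΛ hbσ haΛ haσ hab2 (by omega)


end NumSgpPaper
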